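/- For every holomorphic function F on Π⁺ with ∫_{Π⁺} |F(x+iy)|² dx dy < ∞, one has sup_{x+iy ∈ Π⁺} |F(x+iy)| · y ≤ (1/(2√π)) · (∫_{Π⁺} |F(x+iy)|² dx dy)^{1/2}. -/

import Mathlib

open MeasureTheory Real Set

lemma det_aux (c : ℂ) :
    (((ContinuousLinearMap.toSpanSingleton ℂ c)).restrictScalars ℝ).det
      = Complex.normSq c := by
  have h : (((ContinuousLinearMap.toSpanSingleton ℂ c)).restrictScalars ℝ
      : ℂ →ₗ[ℝ] ℂ) = Algebra.lmul ℝ ℂ c := by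
    ext z
    simp [mul_comm]
  rw [ContinuousLinearMap.det, h]
  rw [← Algebra.norm_apply, Algebra.norm_complex_apply]


lemma circle_avg (g : ℂ → ℂ) {s : ℝ} (hs : 0 < s)
    (h : DifferentiableOn ℂ g (Metric.closedBall 0 s)) :
    ∫ θ in Set.Ioo (-π) π, g (Complex.polarCoord.symm (s, θ)) = (2 * π : ℝ) • g 0 := by
  have hsne : s ≠ 0 := hs.ne'
  have hC : (∮ z in C(0, s), (z - 0)⁻¹ • g z) = (2 * π * Complex.I : ℂ) • g 0 :=
    h.circleIntegral_sub_inv_smul (Metric.mem_ball_self hs)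
  rw [circleIntegral] at hC
  have hEq : ∀ θ : ℝ, deriv (circleMap 0 s) θ • (circleMap 0 s θ - 0)⁻¹ •
      g (circleMap 0 s θ) = Complex.I * g (circleMap 0 s θ) := by
    intro θ
    have hne : circleMap 0 s θ ≠ 0 := circleMap_ne_center hsne
    rw [deriv_circleMap]
    rw [smul_eq_mul, smul_eq_mul, sub_zero]
    field_simp
  simp only [hEq] at hC
  rw [intervalIntegral.integral_const_mul] at hC
  have h2 : ∫ θ in (0:ℝ)..(2*π), g (circleMap 0 s θ) = (2 * π : ℝ) • g 0 := by
    have := hC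
    have h3 : (2 * π * Complex.I : ℂ) • g 0 = Complex.I * ((2*π:ℝ) • g 0) := by
      rw [smul_eq_mul, Complex.real_smul]
      push_cast
      ring
    rw [h3] at this
    exact mul_left_cancel₀ Complex.I_ne_zero this
  -- shift interval
  have hper : Function.Periodic (fun θ : ℝ => g (circleMap 0 s θ)) (2 * π) :=
    (periodic_circleMap 0 s).comp g
  have h4 : ∫ θ in (-π)..(π), g (circleMap 0 s θ) = (2 * π : ℝ) • g 0 := by
    have := hper.intervalIntegral_add_eq (-π) 0
    simp only [zero_add] at this
    rw [show -π + 2*π = π by ring] at this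
    rw [this, h2]
  have h5 : ∀ θ : ℝ, Complex.polarCoord.symm (s, θ) = circleMap 0 s θ := by
    intro θ
    rw [Complex.polarCoord_symm_apply, circleMap]
    simp [Complex.exp_mul_I]
  simp only [h5]
  rw [← h4, intervalIntegral.integral_of_le (by linarith [pi_pos]),
    ← integral_Ioc_eq_integral_Ioo]


lemma area_mvp (g : ℂ → ℂ) {r : ℝ} (hr : 0 < r) (hr1 : r < 1)
    (hg : DifferentiableOn ℂ g (Metric.ball 0 1)) :
    ∫ z in Metric.ball (0:ℂ) r, g z = (π * r ^ 2 : ℝ) • g 0 := by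
  have hcont : ContinuousOn g (Metric.closedBall 0 r) :=
    hg.continuousOn.mono (Metric.closedBall_subset_ball hr1)
  have hsymm_cont : Continuous fun p : ℝ × ℝ => Complex.polarCoord.symm p := by
    simp only [Complex.polarCoord_symm_apply]
    fun_prop
  have habs : ∀ p : ℝ × ℝ, ‖Complex.polarCoord.symm p‖ = |p.1| := by
    intro p
    rw [Complex.norm_polarCoord_symm]
  have h1 : ∫ z in Metric.ball (0:ℂ) r, g z
      = ∫ p in polarCoord.target,
          p.1 • (Set.indicator (Metric.ball (0:ℂ) r) g) (Complex.polarCoord.symm p) := by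
    rw [Complex.integral_comp_polarCoord_symm]
    rw [integral_indicator measurableSet_ball]
  have h2 : ∫ p in polarCoord.target,
        p.1 • (Set.indicator (Metric.ball (0:ℂ) r) g) (Complex.polarCoord.symm p)
      = ∫ p in polarCoord.target,
          (Set.indicator (Set.Ioo (0:ℝ) r ×ˢ Set.Ioo (-π) π)
            (fun p : ℝ × ℝ => p.1 • g (Complex.polarCoord.symm p))) p := by
    apply setIntegral_congr_fun (polarCoord.open_target.measurableSet)
    intro p hp
    rw [polarCoord_target] at hp
    obtain ⟨hp1, hp2⟩ := hp
    dsimp only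
    by_cases hpr : p.1 < r
    · rw [Set.indicator_of_mem, Set.indicator_of_mem]
      · exact ⟨⟨hp1, hpr⟩, hp2⟩
      · rw [Metric.mem_ball, dist_zero_right, habs, abs_of_pos hp1]
        exact hpr
    · rw [Set.indicator_of_notMem, Set.indicator_of_notMem, smul_zero]
      · intro hmem
        exact hpr hmem.1.2
      · rw [Metric.mem_ball, dist_zero_right, habs, abs_of_pos hp1]
        exact hpr
  have hsub : Set.Ioo (0:ℝ) r ×ˢ Set.Ioo (-π) π ⊆ polarCoord.target := by
    rw [polarCoord_target]
    exact Set.prod_mono (fun x hx => hx.1) (fun x hx => hx)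
  have h3 : ∫ p in polarCoord.target,
        (Set.indicator (Set.Ioo (0:ℝ) r ×ˢ Set.Ioo (-π) π)
          (fun p : ℝ × ℝ => p.1 • g (Complex.polarCoord.symm p))) p
      = ∫ p in Set.Ioo (0:ℝ) r ×ˢ Set.Ioo (-π) π,
          p.1 • g (Complex.polarCoord.symm p) := by
    rw [setIntegral_indicator (by measurability)]
    rw [Set.inter_eq_right.mpr hsub]
  have hcont2 : ContinuousOn (fun p : ℝ × ℝ => p.1 • g (Complex.polarCoord.symm p))
      (Set.Icc (0:ℝ) r ×ˢ Set.Icc (-π) π) := by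
    apply ContinuousOn.smul continuousOn_fst
    apply hcont.comp hsymm_cont.continuousOn
    intro p hp
    rw [Metric.mem_closedBall, dist_zero_right, habs, abs_of_nonneg hp.1.1]
    exact hp.1.2
  have hint : IntegrableOn (fun p : ℝ × ℝ => p.1 • g (Complex.polarCoord.symm p))
      (Set.Ioo (0:ℝ) r ×ˢ Set.Ioo (-π) π) := by
    apply (hcont2.integrableOn_compact (isCompact_Icc.prod isCompact_Icc)).mono_set
    exact Set.prod_mono Set.Ioo_subset_Icc_self Set.Ioo_subset_Icc_self
  have h4 : ∫ p in Set.Ioo (0:ℝ) r ×ˢ Set.Ioo (-π) π,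
        p.1 • g (Complex.polarCoord.symm p)
      = ∫ s in Set.Ioo (0:ℝ) r, ∫ θ in Set.Ioo (-π) π,
          s • g (Complex.polarCoord.symm (s, θ)) := by
    rw [Measure.volume_eq_prod]
    rw [Measure.volume_eq_prod] at hint
    exact setIntegral_prod _ hint
  have h5 : ∀ s ∈ Set.Ioo (0:ℝ) r, ∫ θ in Set.Ioo (-π) π,
      s • g (Complex.polarCoord.symm (s, θ)) = s • ((2 * π : ℝ) • g 0) := by
    intro s hs
    rw [integral_smul]
    congr 1
    apply circle_avg g hs.1
    exact hg.mono ((Metric.closedBall_subset_ball (lt_trans hs.2 hr1)))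
  rw [h1, h2, h3, h4]
  rw [setIntegral_congr_fun measurableSet_Ioo h5]
  rw [integral_smul_const]
  have h6 : ∫ s in Set.Ioo (0:ℝ) r, s = r ^ 2 / 2 := by
    rw [← integral_Ioc_eq_integral_Ioo, ← intervalIntegral.integral_of_le hr.le]
    simp [integral_id]
  rw [h6, smul_smul]
  congr 1
  ring

lemma disc_bound (f : ℂ → ℂ) {r : ℝ} (hr : 0 < r) (hr1 : r < 1)
    (hf : DifferentiableOn ℂ f (Metric.ball 0 1)) :
    π * r ^ 2 * ‖f 0‖ ^ 2 ≤ ∫ ζ in Metric.ball (0:ℂ) r, ‖f ζ‖ ^ 2 := by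
  have hsq : DifferentiableOn ℂ (fun ζ => (f ζ) ^ 2) (Metric.ball 0 1) := hf.pow 2
  have h := area_mvp (fun ζ => (f ζ) ^ 2) hr hr1 hsq
  have h2 : π * r ^ 2 * ‖f 0‖ ^ 2 = ‖(π * r ^ 2 : ℝ) • (f 0) ^ 2‖ := by
    rw [norm_smul, norm_pow]
    rw [Real.norm_eq_abs, abs_of_nonneg (by positivity)]
  rw [h2, ← h]
  refine (norm_integral_le_integral_norm _).trans_eq ?_
  apply setIntegral_congr_fun measurableSet_ball
  intro ζ _
  simp [norm_pow]

lemma key_lemma (F : ℂ → ℂ) (H : Set ℂ) (hHdef : H = {z : ℂ | 0 < z.im})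
    (hF : DifferentiableOn ℂ F H) (M : ℝ)
    (hM : ∫ w in H, ‖F w‖ ^ 2 = M)
    (hIntH : IntegrableOn (fun w => ‖F w‖ ^ 2) H)
    (z : ℂ) (hy : 0 < z.im) : π * (2 * z.im * ‖F z‖) ^ 2 ≤ M := by
  set φ : ℂ → ℂ := fun ζ => (z.re : ℂ) + Complex.I * (z.im : ℂ) * ((1 + ζ) / (1 - ζ)) with hφ
  set φ' : ℂ → ℂ := fun ζ => 2 * Complex.I * (z.im : ℂ) / (1 - ζ) ^ 2 with hφ'
  have hne : ∀ ζ : ℂ, ζ ∈ Metric.ball (0:ℂ) 1 → (1:ℂ) - ζ ≠ 0 := by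
    intro ζ hζ h
    rw [sub_eq_zero] at h
    rw [Metric.mem_ball, dist_zero_right, ← h] at hζ
    simp at hζ
  have hder : ∀ ζ ∈ Metric.ball (0:ℂ) 1, HasDerivAt φ (φ' ζ) ζ := by
    intro ζ hζ
    have ha : HasDerivAt (fun w : ℂ => 1 + w) 1 ζ := by
      simpa using (hasDerivAt_id ζ).const_add (1:ℂ)
    have hb : HasDerivAt (fun w : ℂ => 1 - w) (-1) ζ := by
      simpa using (hasDerivAt_id ζ).const_sub (1:ℂ)
    have h1 := ha.div hb (hne ζ hζ)
    have h2 := (h1.const_mul (Complex.I * (z.im:ℂ))).const_add (z.re:ℂ)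
    refine h2.congr_deriv ?_
    rw [hφ']
    have := hne ζ hζ
    field_simp
    ring
  have hnormSq : ∀ ζ : ℂ, ζ ∈ Metric.ball (0:ℂ) 1 → Complex.normSq ζ < 1 := by
    intro ζ hζ
    rw [Metric.mem_ball, dist_zero_right] at hζ
    have h1 : Complex.normSq ζ = ‖ζ‖ ^ 2 := by
      rw [Complex.normSq_eq_norm_sq]
    rw [h1]
    nlinarith [norm_nonneg ζ]
  have him : ∀ ζ ∈ Metric.ball (0:ℂ) 1, φ ζ ∈ H := by
    intro ζ hζ
    have h2 : 0 < Complex.normSq (1 - ζ) := Complex.normSq_pos.mpr (hne ζ hζ)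
    have hre : 0 < ((1 + ζ) / (1 - ζ)).re := by
      rw [Complex.div_re]
      have h3 : (1 + ζ).re * (1 - ζ).re + (1 + ζ).im * (1 - ζ).im
          = 1 - Complex.normSq ζ := by
        simp [Complex.normSq_apply]
        ring
      rw [← add_div, h3]
      have := hnormSq ζ hζ
      exact div_pos (by linarith) h2
    have h4 : (φ ζ).im = z.im * ((1 + ζ) / (1 - ζ)).re := by
      simp [hφ]
    rw [hHdef]
    simp only [Set.mem_setOf_eq, h4]
    positivity
  have hinj : Set.InjOn φ (Metric.ball 0 1) := by
    intro a ha b hb h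
    have h1 := hne a ha
    have h2 := hne b hb
    have hyne : (z.im : ℂ) ≠ 0 := by
      simpa using hy.ne'
    rw [hφ] at h
    simp only [add_right_inj] at h
    rw [mul_assoc, mul_assoc] at h
    have h3 := mul_left_cancel₀ Complex.I_ne_zero h
    have h4 := mul_left_cancel₀ hyne h3
    rw [div_eq_div_iff h1 h2] at h4
    have h5 : 2 * a = 2 * b := by linear_combination h4
    exact mul_left_cancel₀ two_ne_zero h5
  set f : ℂ → ℂ := fun ζ => F (φ ζ) * φ' ζ with hf
  have hφdiff : DifferentiableOn ℂ φ (Metric.ball 0 1) :=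
    fun ζ hζ => (hder ζ hζ).differentiableAt.differentiableWithinAt
  have hfd : DifferentiableOn ℂ f (Metric.ball 0 1) := by
    apply DifferentiableOn.mul
    · exact hF.comp hφdiff him
    · intro ζ hζ
      apply DifferentiableAt.differentiableWithinAt
      apply DifferentiableAt.div (differentiableAt_const _)
      · exact (differentiableAt_const _ |>.sub differentiableAt_id).pow 2
      · exact pow_ne_zero 2 (hne ζ hζ)
  have hφ0 : φ 0 = z := by
    rw [hφ]
    simp
    rw [mul_comm]
    exact Complex.re_add_im z
  have hf0 : ‖f 0‖ = 2 * z.im * ‖F z‖ := by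
    rw [hf]
    simp only [hφ0]
    rw [hφ']
    simp only [sub_zero, one_pow, div_one, norm_mul]
    simp [Complex.norm_real, Complex.norm_I, Real.norm_eq_abs, abs_of_pos hy,
      Complex.norm_two]
    ring
  have main : ∀ r : ℝ, r ∈ Set.Ioo (0:ℝ) 1 →
      π * r ^ 2 * (2 * z.im * ‖F z‖) ^ 2 ≤ M := by
    intro r hr
    have hb := disc_bound f hr.1 hr.2 hfd
    rw [hf0] at hb
    refine hb.trans ?_
    have hball : Metric.ball (0:ℂ) r ⊆ Metric.ball 0 1 := Metric.ball_subset_ball hr.2.le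
    have hcov := integral_image_eq_integral_abs_det_fderiv_smul volume
      (measurableSet_ball : MeasurableSet (Metric.ball (0:ℂ) r))
      (fun ζ hζ => ((hasDerivAt_iff_hasFDerivAt.mp
        (hder ζ (hball hζ))).restrictScalars ℝ).hasFDerivWithinAt)
      (hinj.mono hball) (fun w => ‖F w‖ ^ 2)
    have step1 : ∫ w in φ '' Metric.ball 0 r, ‖F w‖ ^ 2
        = ∫ ζ in Metric.ball (0:ℂ) r, ‖f ζ‖ ^ 2 := by
      rw [hcov]
      apply setIntegral_congr_fun measurableSet_ball
      intro ζ _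
      dsimp only
      rw [det_aux, abs_of_nonneg (Complex.normSq_nonneg _), smul_eq_mul]
      rw [norm_mul, mul_pow, Complex.normSq_eq_norm_sq]
      ring
    rw [← step1, ← hM]
    apply setIntegral_mono_set hIntH
    · exact ae_of_all _ (fun w => by positivity)
    · apply HasSubset.Subset.eventuallyLE
      rintro w ⟨ζ, hζ, rfl⟩
      exact him ζ (hball hζ)
  have lim : Filter.Tendsto (fun r : ℝ => π * r ^ 2 * (2 * z.im * ‖F z‖) ^ 2)
      (nhdsWithin 1 (Set.Iio 1)) (nhds (π * 1 ^ 2 * (2 * z.im * ‖F z‖) ^ 2)) := by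
    apply Filter.Tendsto.mono_left _ nhdsWithin_le_nhds
    exact Continuous.tendsto (by continuity) 1
  have hle : π * 1 ^ 2 * (2 * z.im * ‖F z‖) ^ 2 ≤ M := by
    apply le_of_tendsto lim
    filter_upwards [Ioo_mem_nhdsLT_of_mem (Set.mem_Ioc.mpr ⟨zero_lt_one, le_refl 1⟩)]
    exact main
  linarith

/-- Sharp pointwise estimate: `sup_{x+iy ∈ Π⁺} |F(x+iy)| y ≤ ‖F‖_{A²}/(2√π)`. -/
theorem pointwise_bound_halfplane (F : ℂ → ℂ)
    (hF : DifferentiableOn ℂ F {z : ℂ | 0 < z.im})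
    (hInt : IntegrableOn
      (fun p : ℝ × ℝ => ‖F (p.1 + p.2 * Complex.I)‖ ^ 2)
      {p : ℝ × ℝ | 0 < p.2}) :
    ⨆ z : {z : ℂ // 0 < z.im}, ‖F z.1‖ * (z.1).im
      ≤ (1 / (2 * Real.sqrt π)) *
        (∫ p in {p : ℝ × ℝ | 0 < p.2},
          ‖F (p.1 + p.2 * Complex.I)‖ ^ 2) ^ ((1 : ℝ) / 2) := by
  set M : ℝ := ∫ p in {p : ℝ × ℝ | 0 < p.2},
      ‖F (p.1 + p.2 * Complex.I)‖ ^ 2 with hMdef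
  set H : Set ℂ := {z : ℂ | 0 < z.im} with hHdef
  have hHmeas : MeasurableSet H := by
    exact measurableSet_lt measurable_const Complex.measurable_im
  have hSmeas : MeasurableSet {p : ℝ × ℝ | 0 < p.2} :=
    measurableSet_lt measurable_const measurable_snd
  -- transfer the integral and integrability to ℂ
  have hpre : (Complex.measurableEquivRealProd) ⁻¹' {p : ℝ × ℝ | 0 < p.2} = H := by
    ext z
    simp [Complex.measurableEquivRealProd_apply, hHdef]
  have hcomp : ∀ z : ℂ, ‖F ((z.re : ℂ) + (z.im : ℂ) * Complex.I)‖ ^ 2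
      = ‖F z‖ ^ 2 := by
    intro z
    rw [Complex.re_add_im]
  have hM : ∫ w in H, ‖F w‖ ^ 2 = M := by
    rw [hMdef,
      ← Complex.volume_preserving_equiv_real_prod.setIntegral_preimage_emb
        Complex.measurableEquivRealProd.measurableEmbedding
        (fun p : ℝ × ℝ => ‖F (p.1 + p.2 * Complex.I)‖ ^ 2)
        {p : ℝ × ℝ | 0 < p.2}, hpre]
    apply setIntegral_congr_fun hHmeas
    intro z _
    simpa [Complex.measurableEquivRealProd_apply] using (hcomp z).symm
  have hIntH : IntegrableOn (fun w => ‖F w‖ ^ 2) H := by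
    have := (Complex.volume_preserving_equiv_real_prod.integrableOn_comp_preimage
      Complex.measurableEquivRealProd.measurableEmbedding
      (f := fun p : ℝ × ℝ => ‖F (p.1 + p.2 * Complex.I)‖ ^ 2)
      (s := {p : ℝ × ℝ | 0 < p.2})).mpr hInt
    rw [hpre] at this
    apply this.congr_fun _ hHmeas
    intro z _
    simpa [Complex.measurableEquivRealProd_apply, Function.comp] using hcomp z
  have hM0 : 0 ≤ M := by
    rw [← hM]
    apply setIntegral_nonneg hHmeas
    intro w _
    positivity
  -- pointwise bound
  have key : ∀ z : ℂ, 0 < z.im → π * (2 * z.im * ‖F z‖) ^ 2 ≤ M :=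
    fun z hy => key_lemma F H hHdef hF M hM hIntH z hy
  -- conclude
  haveI : Nonempty {z : ℂ // 0 < z.im} := ⟨⟨Complex.I, by simp⟩⟩
  apply ciSup_le
  intro z0
  obtain ⟨z, hz⟩ := z0
  have hk := key z hz
  have ha : 0 ≤ ‖F z‖ * z.im :=
    mul_nonneg (norm_nonneg _) hz.le
  rw [Real.sqrt_eq_rpow] at *
  rw [show ((1:ℝ)/(2 * π ^ ((1:ℝ)/2))) * M ^ ((1:ℝ)/2)
      = M ^ ((1:ℝ)/2) / (2 * π ^ ((1:ℝ)/2)) by ring]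
  show ‖F z‖ * z.im ≤ M ^ ((1:ℝ)/2) / (2 * π ^ ((1:ℝ)/2))
  rw [le_div_iff₀ (by positivity)]
  have h1 : ‖F z‖ * z.im * (2 * π ^ ((1:ℝ)/2))
      = Real.sqrt π * (2 * z.im * ‖F z‖) := by
    rw [← Real.sqrt_eq_rpow]; ring
  rw [h1]
  have h2 : Real.sqrt π * (2 * z.im * ‖F z‖)
      = Real.sqrt (π * (2 * z.im * ‖F z‖) ^ 2) := by
    rw [Real.sqrt_mul pi_pos.le, Real.sqrt_sq (by positivity)]
  rw [h2, ← Real.sqrt_eq_rpow]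
  exact Real.sqrt_le_sqrt hk
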